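/- For distinct primes p < q < r, Ψ_{pqr}(x) = Φ_{pq}(x)·Ψ_{pq}(x^r). -/
import Mathlib


open Polynomial

/-- The reciprocal cyclotomic polynomial Ψₙ(x) = (xⁿ - 1)/Φₙ(x). -/
noncomputable def Psi (n : ℕ) : ℤ[X] := (X ^ n - 1) /ₘ cyclotomic n ℤ

lemma cyclotomic_mul_psi (n : ℕ) : cyclotomic n ℤ * Psi n = X ^ n - 1 := by
  obtain ⟨c, hc⟩ := cyclotomic.dvd_X_pow_sub_one n ℤ
  rw [Psi, hc, mul_divByMonic_cancel_left _ (cyclotomic.monic n ℤ)]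

theorem psi_three_primes_factor (p q r : ℕ) (hp : p.Prime) (hq : q.Prime) (hr : r.Prime)
    (hpq : p < q) (hqr : q < r) :
    Psi (p * q * r) = cyclotomic (p * q) ℤ * (Psi (p * q)).comp (X ^ r) := by
  have hrpq : ¬ r ∣ p * q := by
    intro h
    rcases (Nat.Prime.dvd_mul hr).mp h with h | h
    · exact absurd ((Nat.prime_dvd_prime_iff_eq hr hp).mp h) (by omega)
    · exact absurd ((Nat.prime_dvd_prime_iff_eq hr hq).mp h) (by omega)
  have key : X ^ (p * q * r) - 1 =
      cyclotomic (p * q * r) ℤ * (cyclotomic (p * q) ℤ * (Psi (p * q)).comp (X ^ r)) := by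
    have h1 : (expand ℤ r) (cyclotomic (p * q) ℤ) =
        cyclotomic (p * q * r) ℤ * cyclotomic (p * q) ℤ :=
      cyclotomic_expand_eq_cyclotomic_mul hr hrpq ℤ
    have h2 := congrArg (fun f => (expand ℤ r) f) (cyclotomic_mul_psi (p * q))
    simp only [map_mul, map_sub, map_pow, map_one, expand_X] at h2
    calc X ^ (p * q * r) - 1 = ((X : ℤ[X]) ^ r) ^ (p * q) - 1 := by
          rw [← pow_mul, mul_comm r (p*q)]
      _ = (expand ℤ r) (cyclotomic (p * q) ℤ) * (expand ℤ r) (Psi (p * q)) := h2.symm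
      _ = _ := by
          rw [h1, expand_eq_comp_X_pow]; ring
  rw [Psi, key, mul_divByMonic_cancel_left _ (cyclotomic.monic _ ℤ)]
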